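/- Fix N ≥ 1, λ > 0, K ≥ 0, and a label set Y. Let ℓ : ℝ^C × Y → ℝ be such that for each y, the map a ↦ ℓ(a, y) is strictly convex, differentiable, and has gradient bounded in Euclidean norm by K, and let R : ℝ^{D×C} → ℝ be 1-strongly convex and differentiable. Let D = {(x₁,y₁),…,(x_N,y_N)} and D′ be two datasets of N examples with ‖x_n‖₂ ≤ 1 for all inputs, that agree in all but one example. Define J(θ; D) = (1/N) ∑_{n=1}^N ℓ(θᵀx_n, y_n) + λ R(θ). If θ₁ minimizes J(·; D) and θ₂ minimizes J(·; D′), then ‖θ₁ − θ₂‖_F ≤ 2K/(Nλ). -/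

import Mathlib

open Set

/-- The matrix–vector product `θᵀ x ∈ ℝ^C`, where `θ ∈ ℝ^{D×C}` is viewed as an element of
the Euclidean space indexed by `Fin D × Fin C` (so its Euclidean norm is the Frobenius norm). -/
noncomputable def matVecT {D C : ℕ} (θ : EuclideanSpace ℝ (Fin D × Fin C))
    (x : EuclideanSpace ℝ (Fin D)) : EuclideanSpace ℝ (Fin C) :=
  WithLp.toLp 2 (fun c => ∑ d, θ (d, c) * x d)

/-- `matVecT · x` as a linear map in `θ`. -/
noncomputable def matVecTL {D C : ℕ} (x : EuclideanSpace ℝ (Fin D)) :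
    EuclideanSpace ℝ (Fin D × Fin C) →ₗ[ℝ] EuclideanSpace ℝ (Fin C) where
  toFun θ := matVecT θ x
  map_add' θ₁ θ₂ := by
    ext c
    simp [matVecT, add_mul, Finset.sum_add_distrib]
  map_smul' r θ := by
    ext c
    simp [matVecT, Finset.mul_sum, mul_assoc]

lemma matVecT_sub {D C : ℕ} (θ₁ θ₂ : EuclideanSpace ℝ (Fin D × Fin C))
    (x : EuclideanSpace ℝ (Fin D)) :
    matVecT θ₁ x - matVecT θ₂ x = matVecT (θ₁ - θ₂) x := by
  show matVecTL x θ₁ - matVecTL x θ₂ = matVecTL x (θ₁ - θ₂)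
  rw [map_sub]

lemma matVecT_norm_le {D C : ℕ} (θ : EuclideanSpace ℝ (Fin D × Fin C))
    (x : EuclideanSpace ℝ (Fin D)) : ‖matVecT θ x‖ ≤ ‖θ‖ * ‖x‖ := by
  have key : ∑ c, (matVecT θ x c) ^ 2 ≤ (‖θ‖ * ‖x‖) ^ 2 := by
    have h1 : ∀ c : Fin C, (matVecT θ x c) ^ 2 ≤
        ‖(show EuclideanSpace ℝ (Fin D) from WithLp.toLp 2 (fun d => θ (d, c)))‖ ^ 2 * ‖x‖ ^ 2 := by
      intro c
      set row : EuclideanSpace ℝ (Fin D) := WithLp.toLp 2 (fun d => θ (d, c)) with hrow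
      have hv : matVecT θ x c = inner (𝕜 := ℝ) row x := by
        simp [matVecT, PiLp.inner_apply, hrow, RCLike.inner_apply, conj_trivial, mul_comm]
      rw [hv, ← mul_pow, ← sq_abs (inner (𝕜 := ℝ) row x)]
      have := abs_real_inner_le_norm row x
      nlinarith [abs_nonneg (inner (𝕜 := ℝ) row x)]
    calc ∑ c, (matVecT θ x c) ^ 2
        ≤ ∑ c, ‖(show EuclideanSpace ℝ (Fin D) from WithLp.toLp 2 (fun d => θ (d, c)))‖ ^ 2 * ‖x‖ ^ 2 :=
          Finset.sum_le_sum fun c _ => h1 c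
      _ = (∑ c, ‖(show EuclideanSpace ℝ (Fin D) from WithLp.toLp 2 (fun d => θ (d, c)))‖ ^ 2) * ‖x‖ ^ 2 := by
          rw [Finset.sum_mul]
      _ = (‖θ‖ * ‖x‖) ^ 2 := by
          rw [mul_pow]
          congr 1
          have hsq : ∀ (v : EuclideanSpace ℝ (Fin D)), ‖v‖ ^ 2 = ∑ d, (v d) ^ 2 := fun v => by
            rw [EuclideanSpace.norm_eq, Real.sq_sqrt (by positivity)]
            simp [sq_abs]
          have hθ : ‖θ‖ ^ 2 = ∑ p : Fin D × Fin C, (θ p) ^ 2 := by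
            rw [EuclideanSpace.norm_eq, Real.sq_sqrt (by positivity)]
            simp [sq_abs]
          rw [hθ, Fintype.sum_prod_type, Finset.sum_comm]
          exact Finset.sum_congr rfl fun c _ => by rw [hsq]
  have : ‖matVecT θ x‖ ^ 2 ≤ (‖θ‖ * ‖x‖) ^ 2 := by
    rw [EuclideanSpace.norm_eq, Real.sq_sqrt (by positivity)]
    simpa [sq_abs] using key
  nlinarith [norm_nonneg (matVecT θ x), mul_nonneg (norm_nonneg θ) (norm_nonneg x)]

lemma loss_lipschitz {E : Type*} [NormedAddCommGroup E] [InnerProductSpace ℝ E]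
    [CompleteSpace E] {f : E → ℝ} {K : ℝ}
    (hdiff : Differentiable ℝ f) (hgrad : ∀ a, ‖gradient f a‖ ≤ K) (a b : E) :
    f a - f b ≤ K * ‖a - b‖ := by
  have hb : ∀ v : E, ‖fderiv ℝ f v‖ ≤ K := by
    intro v
    have : ‖gradient f v‖ = ‖fderiv ℝ f v‖ := by
      unfold gradient
      exact (InnerProductSpace.toDual ℝ E).symm.norm_map _
    rw [← this]; exact hgrad v
  have := Convex.norm_image_sub_le_of_norm_fderiv_le (s := univ) (f := f)
    (fun v _ => hdiff v) (fun v _ => hb v) convex_univ (mem_univ b) (mem_univ a)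
  calc f a - f b ≤ ‖f a - f b‖ := le_abs_self _
    _ ≤ K * ‖a - b‖ := this

lemma strong_min {E : Type*} [NormedAddCommGroup E] [InnerProductSpace ℝ E]
    {f : E → ℝ} {m : ℝ} (hf : StrongConvexOn univ m f)
    {z : E} (hz : ∀ w, f z ≤ f w) (w : E) :
    f z + m / 2 * ‖z - w‖ ^ 2 ≤ f w := by
  have h : ∀ a ∈ Set.Ioo (0:ℝ) 1, f z + a * (m / 2 * ‖z - w‖ ^ 2) ≤ f w := by
    intro a ha
    have hb : 0 < 1 - a := by linarith [ha.2]
    have := hf.2 (mem_univ z) (mem_univ w) ha.1.le hb.le (by ring)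
    have hmin := hz (a • z + (1 - a) • w)
    have h2 : (1 - a) * f z ≤ (1 - a) * f w - a * (1 - a) * (m / 2 * ‖z - w‖ ^ 2) := by
      simp only [smul_eq_mul] at this
      nlinarith
    nlinarith
  have htend : Filter.Tendsto (fun a : ℝ => f z + a * (m / 2 * ‖z - w‖ ^ 2))
      (nhdsWithin 1 (Set.Iio 1)) (nhds (f z + 1 * (m / 2 * ‖z - w‖ ^ 2))) := by
    apply Filter.Tendsto.mono_left _ nhdsWithin_le_nhds
    exact (continuous_const.add (continuous_id.mul continuous_const)).tendsto 1
  have : f z + 1 * (m / 2 * ‖z - w‖ ^ 2) ≤ f w := by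
    refine le_of_tendsto htend ?_
    filter_upwards [Ioo_mem_nhdsLT_of_mem (Set.mem_Ioc.2 ⟨zero_lt_one, le_refl 1⟩)] with a ha
    exact h a ha
  linarith

lemma convexOn_finset_sum {E ι : Type*} [AddCommGroup E] [Module ℝ E]
    (t : Finset ι) (f : ι → E → ℝ) (h : ∀ i ∈ t, ConvexOn ℝ univ (f i)) :
    ConvexOn ℝ univ (fun x => ∑ i ∈ t, f i x) := by
  classical
  induction t using Finset.induction with
  | empty => simpa using convexOn_const 0 convex_univ
  | @insert i s hni ih =>
    simp only [Finset.sum_insert hni]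
    exact (h i (Finset.mem_insert_self i s)).add
      (ih fun j hj => h j (Finset.mem_insert_of_mem hj))

/-- Lemma 1 of the paper: the minimizers of the regularized empirical risks on
two datasets differing in a single example satisfy `‖θ₁ - θ₂‖_F ≤ 2K/(Nλ)`. -/
theorem erm_sensitivity_bound {D C : ℕ} {Y : Type*} (N : ℕ) (hN : 1 ≤ N)
    (lam K : ℝ) (hlam : 0 < lam) (hK : 0 ≤ K)
    (ℓ : EuclideanSpace ℝ (Fin C) → Y → ℝ)
    (hconv : ∀ y, StrictConvexOn ℝ Set.univ (fun a => ℓ a y))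
    (hdiff : ∀ y, Differentiable ℝ (fun a => ℓ a y))
    (hgrad : ∀ y a, ‖gradient (fun a => ℓ a y) a‖ ≤ K)
    (R : EuclideanSpace ℝ (Fin D × Fin C) → ℝ)
    (hRconv : ConvexOn ℝ Set.univ (fun θ => R θ - 1 / 2 * ‖θ‖ ^ 2))
    (hRdiff : Differentiable ℝ R)
    (x x' : Fin N → EuclideanSpace ℝ (Fin D)) (y y' : Fin N → Y)
    (hx : ∀ n, ‖x n‖ ≤ 1) (hx' : ∀ n, ‖x' n‖ ≤ 1)
    (hdiffer : ∃ n₀, ∀ n, n ≠ n₀ → x n = x' n ∧ y n = y' n)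
    (J J' : EuclideanSpace ℝ (Fin D × Fin C) → ℝ)
    (hJ : ∀ θ, J θ = (1 / (N : ℝ)) * ∑ n, ℓ (matVecT θ (x n)) (y n) + lam * R θ)
    (hJ' : ∀ θ, J' θ = (1 / (N : ℝ)) * ∑ n, ℓ (matVecT θ (x' n)) (y' n) + lam * R θ)
    (θ₁ θ₂ : EuclideanSpace ℝ (Fin D × Fin C))
    (hθ₁ : ∀ θ, J θ₁ ≤ J θ) (hθ₂ : ∀ θ, J' θ₂ ≤ J' θ) :
    ‖θ₁ - θ₂‖ ≤ 2 * K / (N * lam) := by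
  have hNpos : (0:ℝ) < N := by exact_mod_cast hN
  -- strong convexity of the objectives
  have hstrong : ∀ (u : Fin N → EuclideanSpace ℝ (Fin D)) (v : Fin N → Y)
      (G : EuclideanSpace ℝ (Fin D × Fin C) → ℝ),
      (∀ θ, G θ = (1 / (N : ℝ)) * ∑ n, ℓ (matVecT θ (u n)) (v n) + lam * R θ) →
      StrongConvexOn univ lam G := by
    intro u v G hG
    rw [strongConvexOn_iff_convex]
    have hterm : ConvexOn ℝ univ
        (fun θ : EuclideanSpace ℝ (Fin D × Fin C) =>
          (1 / (N : ℝ)) * ∑ n, ℓ (matVecT θ (u n)) (v n)) := by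
      have hsum : ConvexOn ℝ univ
          (fun θ : EuclideanSpace ℝ (Fin D × Fin C) =>
            ∑ n, ℓ (matVecT θ (u n)) (v n)) := by
        apply convexOn_finset_sum
        intro n _
        have := ((hconv (v n)).convexOn).comp_linearMap (matVecTL (u n))
        exact this
      have := hsum.smul (c := 1 / (N : ℝ)) (by positivity)
      simpa [smul_eq_mul] using this
    have hreg : ConvexOn ℝ univ
        (fun θ : EuclideanSpace ℝ (Fin D × Fin C) =>
          lam * (R θ - 1 / 2 * ‖θ‖ ^ 2)) := by
      have := hRconv.smul (c := lam) hlam.le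
      simpa [smul_eq_mul] using this
    have heq : (fun θ : EuclideanSpace ℝ (Fin D × Fin C) => G θ - lam / 2 * ‖θ‖ ^ 2)
        = (fun θ : EuclideanSpace ℝ (Fin D × Fin C) =>
            (1 / (N : ℝ)) * ∑ n, ℓ (matVecT θ (u n)) (v n)) +
          (fun θ => lam * (R θ - 1 / 2 * ‖θ‖ ^ 2)) := by
      funext θ
      simp only [Pi.add_apply, hG θ]
      ring
    rw [heq]
    exact hterm.add hreg
  have hSC : StrongConvexOn univ lam J := hstrong x y J hJ
  have hSC' : StrongConvexOn univ lam J' := hstrong x' y' J' hJ'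
  set d := ‖θ₁ - θ₂‖ with hd
  have hdnn : 0 ≤ d := norm_nonneg _
  have h1 : J θ₁ + lam / 2 * d ^ 2 ≤ J θ₂ := strong_min hSC hθ₁ θ₂
  have h2 : J' θ₂ + lam / 2 * d ^ 2 ≤ J' θ₁ := by
    have := strong_min hSC' hθ₂ θ₁
    rwa [norm_sub_rev] at this
  -- bound the difference of objectives
  obtain ⟨n₀, hn₀⟩ := hdiffer
  set T : Fin N → ℝ := fun n =>
    ℓ (matVecT θ₂ (x n)) (y n) - ℓ (matVecT θ₁ (x n)) (y n) +
      ℓ (matVecT θ₁ (x' n)) (y' n) - ℓ (matVecT θ₂ (x' n)) (y' n) with hT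
  have hsumT : J θ₂ - J θ₁ + (J' θ₁ - J' θ₂) = (1 / (N : ℝ)) * ∑ n, T n := by
    rw [hJ θ₁, hJ θ₂, hJ' θ₁, hJ' θ₂]
    simp only [hT, Finset.sum_add_distrib, Finset.sum_sub_distrib]
    ring
  have hTsum : ∑ n, T n = T n₀ := by
    apply Finset.sum_eq_single_of_mem n₀ (Finset.mem_univ n₀)
    intro n _ hne
    obtain ⟨hxe, hye⟩ := hn₀ n hne
    simp [hT, hxe, hye]
  -- Lipschitz bounds for the two terms at n₀
  have key : ∀ (a b : EuclideanSpace ℝ (Fin D × Fin C)) (u : EuclideanSpace ℝ (Fin D))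
      (hu : ‖u‖ ≤ 1) (v : Y),
      ℓ (matVecT a u) v - ℓ (matVecT b u) v ≤ K * ‖a - b‖ := by
    intro a b u hu v
    have hl := loss_lipschitz (hdiff v) (hgrad v) (matVecT a u) (matVecT b u)
    have hnorm : ‖matVecT a u - matVecT b u‖ ≤ ‖a - b‖ := by
      rw [matVecT_sub]
      calc ‖matVecT (a - b) u‖ ≤ ‖a - b‖ * ‖u‖ := matVecT_norm_le _ _
        _ ≤ ‖a - b‖ * 1 := by
            exact mul_le_mul_of_nonneg_left hu (norm_nonneg _)
        _ = ‖a - b‖ := mul_one _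
    calc ℓ (matVecT a u) v - ℓ (matVecT b u) v ≤ K * ‖matVecT a u - matVecT b u‖ := hl
      _ ≤ K * ‖a - b‖ := mul_le_mul_of_nonneg_left hnorm hK
  have hTn₀ : T n₀ ≤ 2 * K * d := by
    have e1 : ℓ (matVecT θ₂ (x n₀)) (y n₀) - ℓ (matVecT θ₁ (x n₀)) (y n₀) ≤ K * d := by
      have := key θ₂ θ₁ (x n₀) (hx n₀) (y n₀)
      rwa [norm_sub_rev] at this
    have e2 : ℓ (matVecT θ₁ (x' n₀)) (y' n₀) - ℓ (matVecT θ₂ (x' n₀)) (y' n₀) ≤ K * d :=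
      key θ₁ θ₂ (x' n₀) (hx' n₀) (y' n₀)
    simp only [hT]
    linarith
  -- combine
  have hmain : lam * d ^ 2 ≤ 2 * K * d / N := by
    have hle : J θ₂ - J θ₁ + (J' θ₁ - J' θ₂) ≤ (1 / (N : ℝ)) * (2 * K * d) := by
      rw [hsumT, hTsum]
      exact mul_le_mul_of_nonneg_left hTn₀ (by positivity)
    have := h1; have := h2
    rw [div_eq_mul_inv, mul_comm (2 * K * d) _, ← one_div]
    nlinarith
  rcases eq_or_lt_of_le hdnn with h0 | h0
  · rw [← h0]; positivity
  · rw [le_div_iff₀ hNpos] at hmain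
    have hmain' : lam * d * N ≤ 2 * K := by nlinarith
    rw [le_div_iff₀ (show (0:ℝ) < N * lam by positivity)]
    nlinarith
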